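/- Let α : H → N be a finite-meet preserving map between frames and let u = (0,1) ∈ Gl(α). Then ↓u ⊆ Gl(α) is isomorphic as a frame to H via h ↦ (0,h), ↑u ⊆ Gl(α) is isomorphic as a frame to N via n ↦ (n,1), and under the first isomorphism the map (n,h) ↦ (n,h) ∧ (0,1) corresponds to π₂. -/

import Mathlib

section
variable {N H : Type*} [Order.Frame N] [Order.Frame H]

/-- The principal downset `↓(0,1)` of `u = (⊥,⊤)` inside the glueing `Gl(α)`:
elements of `Gl(α)` below `(⊥,⊤)`. -/
def GlDown (α : H → N) : Type _ :=
  {p : N × H // p.1 ≤ α p.2 ∧ p ≤ ((⊥ : N), (⊤ : H))}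

instance (α : H → N) : PartialOrder (GlDown α) :=
  inferInstanceAs (PartialOrder {p : N × H // p.1 ≤ α p.2 ∧ p ≤ ((⊥ : N), (⊤ : H))})

/-- The principal upset `↑(0,1)` of `u = (⊥,⊤)` inside the glueing `Gl(α)`. -/
def GlUp (α : H → N) : Type _ :=
  {p : N × H // p.1 ≤ α p.2 ∧ ((⊥ : N), (⊤ : H)) ≤ p}

instance (α : H → N) : PartialOrder (GlUp α) :=
  inferInstanceAs (PartialOrder {p : N × H // p.1 ≤ α p.2 ∧ ((⊥ : N), (⊤ : H)) ≤ p})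

/-- The map `h ↦ (⊥, h) : H → ↓(0,1)`. -/
def glDownMap (α : H → N) (h : H) : GlDown α :=
  ⟨((⊥ : N), h), bot_le, le_refl ⊥, le_top⟩

/-- The map `n ↦ (n, ⊤) : N → ↑(0,1)`. -/
def glUpMap {α : H → N} (hα_top : α ⊤ = ⊤) (n : N) : GlUp α :=
  ⟨(n, (⊤ : H)), le_top.trans hα_top.ge, bot_le, le_refl ⊤⟩

end

/-- For the Artin glueing `Gl(α)` and `u = (0,1) ∈ Gl(α)`: `↓u ≅ H` via
`h ↦ (0,h)`, `↑u ≅ N` via `n ↦ (n,1)` (both order isomorphisms, hence frame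
isomorphisms), and under the first isomorphism the normal epimorphism
`p ↦ p ⊓ u` corresponds to `π₂`. -/
theorem glueing_down_up_iso
    {N H : Type*} [Order.Frame N] [Order.Frame H]
    (α : H → N) (hα_inf : ∀ a b, α (a ⊓ b) = α a ⊓ α b) (hα_top : α ⊤ = ⊤) :
    -- `h ↦ (0,h)` is a frame isomorphism `H ≅ ↓(0,1)`
    (Function.Bijective (glDownMap α)) ∧
      (∀ h h' : H, h ≤ h' ↔ glDownMap α h ≤ glDownMap α h') ∧
    -- `n ↦ (n,1)` is a frame isomorphism `N ≅ ↑(0,1)`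
      (Function.Bijective (glUpMap (α := α) hα_top)) ∧
      (∀ n n' : N, n ≤ n' ↔ glUpMap (α := α) hα_top n ≤ glUpMap (α := α) hα_top n') ∧
    -- under `h ↦ (0,h)`, the map `p ↦ p ⊓ (0,1)` corresponds to `π₂`
      (∀ p : N × H, p.1 ≤ α p.2 →
        (glDownMap α p.2).1 = p ⊓ ((⊥ : N), (⊤ : H))) := by
  refine ⟨⟨fun a b hab => ?_, fun p => ?_⟩, fun h h' => ?_, ⟨fun a b hab => ?_, fun p => ?_⟩,
    fun n n' => ?_, fun p hp => ?_⟩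
  · exact congrArg (fun x : GlDown α => x.1.2) hab
  · obtain ⟨⟨n, h⟩, h1, h2⟩ := p
    refine ⟨h, ?_⟩
    have : n = ⊥ := le_antisymm h2.1 bot_le
    simp [glDownMap, Subtype.ext_iff, Prod.ext_iff, this]
    rfl
  · constructor
    · intro hh; exact ⟨le_refl _, hh⟩
    · intro hh; exact hh.2
  · exact congrArg (fun x : GlUp α => x.1.1) hab
  · obtain ⟨⟨n, h⟩, h1, h2⟩ := p
    refine ⟨n, ?_⟩
    have : h = ⊤ := le_antisymm le_top h2.2
    simp [glUpMap, Subtype.ext_iff, Prod.ext_iff, this]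
    rfl
  · constructor
    · intro hh; exact ⟨hh, le_refl _⟩
    · intro hh; exact hh.1
  · simp [glDownMap, Prod.ext_iff]
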